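/- Let n be a positive integer and σ a real number, and set J(x, y) = Σ_{k=0}^{n−1} σ^k φ_k(x) φ_k(y). Then for all real x, y: (x + ∂_x)J(x, y) − σ (y − ∂_y)J(x, y) = −2 σ^n a_n φ_{n−1}(x) φ_n(y), where a_n = √(n/2). -/

import Mathlib

/-- The physicist Hermite polynomials, as real functions:
`H₀ = 1`, `H₁(x) = 2x`, `H_{n+2}(x) = 2x·H_{n+1}(x) − 2(n+1)·H_n(x)`. -/
noncomputable def physHermite : ℕ → ℝ → ℝ
  | 0 => fun _ => 1
  | 1 => fun x => 2 * x
  | (n + 2) => fun x => 2 * x * physHermite (n + 1) x - 2 * (n + 1) * physHermite n x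

/-- The normalized Hermite polynomials `p_k(x) = H_k(x)/√(2^k k! √π)`. -/
noncomputable def normHermite (k : ℕ) (x : ℝ) : ℝ :=
  physHermite k x / Real.sqrt (2 ^ k * k.factorial * Real.sqrt Real.pi)

/-- The harmonic oscillator functions `φ_k(x) = e^{−x²/2} p_k(x)`. -/
noncomputable def oscFun (k : ℕ) (x : ℝ) : ℝ :=
  Real.exp (-x ^ 2 / 2) * normHermite k x

/-- The kernel `J(x, y) = Σ_{k=0}^{n−1} σ^k φ_k(x) φ_k(y)` from the proof of Lemma 3 of
Tracy–Widom, "Differential Equations for Dyson Processes". -/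
noncomputable def hermiteJ (n : ℕ) (σ : ℝ) (x y : ℝ) : ℝ :=
  ∑ k ∈ Finset.range n, σ ^ k * oscFun k x * oscFun k y

noncomputable def hermN (k : ℕ) : ℝ :=
  Real.sqrt (2 ^ k * k.factorial * Real.sqrt Real.pi)

lemma hermN_pos (k : ℕ) : 0 < hermN k := by
  apply Real.sqrt_pos.2
  have : (0:ℝ) < Real.sqrt Real.pi := Real.sqrt_pos.2 Real.pi_pos
  positivity

lemma normHermite_eq (k : ℕ) (x : ℝ) : normHermite k x = physHermite k x / hermN k := rfl

lemma hermN_succ (k : ℕ) : hermN (k + 1) = Real.sqrt (2 * (k + 1)) * hermN k := by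
  rw [hermN, hermN, ← Real.sqrt_mul (by positivity)]
  congr 1
  rw [Nat.factorial_succ]
  push_cast
  ring

lemma physHermite_succ (k : ℕ) (x : ℝ) :
    physHermite (k + 1) x = 2 * x * physHermite k x - 2 * k * physHermite (k - 1) x := by
  cases k with
  | zero => simp [physHermite]
  | succ m =>
    simp only [physHermite, Nat.add_sub_cancel]
    push_cast
    ring

lemma hasDerivAt_physHermite : ∀ (k : ℕ) (x : ℝ),
    HasDerivAt (physHermite k) (2 * k * physHermite (k - 1) x) x := by
  intro k
  induction k using Nat.twoStepInduction with
  | zero => intro x; simpa [physHermite] using hasDerivAt_const x (1:ℝ)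
  | one =>
    intro x
    have h : HasDerivAt (fun y : ℝ => 2 * y) 2 x := by
      simpa using (hasDerivAt_id x).const_mul 2
    simpa [physHermite] using h
  | more n ih ih1 =>
    intro x
    have h1 := ih1 x
    have h0 := ih x
    have hmain : HasDerivAt (physHermite (n + 2))
        (2 * physHermite (n + 1) x + 2 * x * (2 * (n + 1) * physHermite n x)
          - 2 * ((n:ℝ) + 1) * (2 * n * physHermite (n - 1) x)) x := by
      have hmul : HasDerivAt (fun x : ℝ => 2 * x * physHermite (n + 1) x)
          (2 * physHermite (n + 1) x + 2 * x * (2 * (n + 1) * physHermite n x)) x := by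
        simpa using ((hasDerivAt_id x).const_mul 2).fun_mul h1
      have hsub := hmul.fun_sub (h0.const_mul (2 * ((n:ℝ) + 1)))
      have : physHermite (n + 2) = fun x =>
          2 * x * physHermite (n + 1) x - 2 * ((n:ℝ) + 1) * physHermite n x := by
        funext z
        simp only [physHermite]
      rw [this]
      convert hsub using 1 <;> ring
    convert hmain using 1
    have hr := physHermite_succ n x
    push_cast
    rw [hr]
    ring

lemma coeff_eq (k : ℕ) : (2 * ((k:ℝ) + 1)) / hermN (k + 1) = Real.sqrt (2 * (k + 1)) / hermN k := by
  rw [hermN_succ]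
  have hs : (0:ℝ) < Real.sqrt (2 * ((k:ℝ) + 1)) := Real.sqrt_pos.2 (by positivity)
  have h2 : Real.sqrt (2 * ((k:ℝ) + 1)) * Real.sqrt (2 * ((k:ℝ) + 1)) = 2 * ((k:ℝ) + 1) :=
    Real.mul_self_sqrt (by positivity)
  rw [div_eq_div_iff (mul_pos hs (hermN_pos k)).ne' (hermN_pos k).ne', ← mul_assoc, h2]

lemma hasDerivAt_normHermite (k : ℕ) (x : ℝ) :
    HasDerivAt (normHermite k) (Real.sqrt (2 * k) * normHermite (k - 1) x) x := by
  have h : HasDerivAt (fun x => physHermite k x / hermN k) (2 * k * physHermite (k - 1) x / hermN k) x :=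
    (hasDerivAt_physHermite k x).div_const (hermN k)
  have heq : (fun x => physHermite k x / hermN k) = normHermite k := by
    funext z; rw [normHermite_eq]
  rw [heq] at h
  convert h using 1
  cases k with
  | zero => simp
  | succ m =>
    rw [Nat.add_sub_cancel, normHermite_eq]
    push_cast
    linear_combination (-(physHermite m x)) * coeff_eq m

lemma normHermite_rec (k : ℕ) (x : ℝ) :
    2 * x * normHermite k x
      = Real.sqrt (2 * (k + 1)) * normHermite (k + 1) x
        + Real.sqrt (2 * k) * normHermite (k - 1) x := by
  have h1 : Real.sqrt (2 * ((k:ℝ) + 1)) * normHermite (k + 1) x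
      = physHermite (k + 1) x / hermN k := by
    rw [normHermite_eq, ← mul_div_assoc,
      div_eq_div_iff (hermN_pos (k + 1)).ne' (hermN_pos k).ne', hermN_succ]
    push_cast
    ring
  have h2 : Real.sqrt (2 * (k:ℝ)) * normHermite (k - 1) x
      = 2 * k * physHermite (k - 1) x / hermN k := by
    cases k with
    | zero => simp
    | succ m =>
      rw [Nat.add_sub_cancel, normHermite_eq]
      push_cast
      linear_combination (-(physHermite m x)) * coeff_eq m
  push_cast
  rw [h1, h2, physHermite_succ, normHermite_eq]
  ring

lemma hasDerivAt_oscFun (k : ℕ) (x : ℝ) :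
    HasDerivAt (oscFun k) (-x * oscFun k x + Real.sqrt (2 * k) * oscFun (k - 1) x) x := by
  have hg : HasDerivAt (fun x : ℝ => Real.exp (-x ^ 2 / 2)) (Real.exp (-x ^ 2 / 2) * (-x)) x := by
    have hp : HasDerivAt (fun x : ℝ => -x ^ 2 / 2) (-x) x := by
      have h : HasDerivAt (fun x : ℝ => -x ^ 2 / 2) (-(((2:ℕ):ℝ) * x ^ (2 - 1)) / 2) x :=
        ((hasDerivAt_pow 2 x).fun_neg).div_const 2
      convert h using 1
      norm_num
      ring
    exact hp.exp
  have h : HasDerivAt (fun x => Real.exp (-x ^ 2 / 2) * normHermite k x)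
      (Real.exp (-x ^ 2 / 2) * -x * normHermite k x
        + Real.exp (-x ^ 2 / 2) * (Real.sqrt (2 * k) * normHermite (k - 1) x)) x :=
    hg.fun_mul (hasDerivAt_normHermite k x)
  have heq : (fun x => Real.exp (-x ^ 2 / 2) * normHermite k x) = oscFun k := by
    funext z; rfl
  rw [heq] at h
  convert h using 1
  simp only [oscFun]
  ring

lemma oscFun_rec (k : ℕ) (y : ℝ) :
    y * oscFun k y - (-y * oscFun k y + Real.sqrt (2 * k) * oscFun (k - 1) y)
      = Real.sqrt (2 * (k + 1)) * oscFun (k + 1) y := by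
  have := normHermite_rec k y
  simp only [oscFun]
  nlinarith [this, Real.exp_pos (-y^2/2)]

/-- **Key identity in the proof of Lemma 3 (Section V of Tracy–Widom, "Differential
Equations for Dyson Processes").**  With `J(x, y) = Σ_{k=0}^{n−1} σ^k φ_k(x) φ_k(y)` and
`a_n = √(n/2)`, one has
`(x + ∂_x)J(x, y) − σ(y − ∂_y)J(x, y) = −2 σ^n a_n φ_{n−1}(x) φ_n(y)`. -/
theorem hermiteJ_identity (n : ℕ) (hn : 0 < n) (σ : ℝ) (x y : ℝ) :
    (x * hermiteJ n σ x y + deriv (fun u => hermiteJ n σ u y) x)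
      - σ * (y * hermiteJ n σ x y - deriv (fun v => hermiteJ n σ x v) y)
    = -2 * σ ^ n * Real.sqrt (n / 2) * oscFun (n - 1) x * oscFun n y := by
  have hx : HasDerivAt (fun u => hermiteJ n σ u y)
      (∑ k ∈ Finset.range n,
        σ ^ k * (-x * oscFun k x + Real.sqrt (2 * k) * oscFun (k - 1) x) * oscFun k y) x := by
    have : HasDerivAt (fun u => ∑ k ∈ Finset.range n, σ ^ k * oscFun k u * oscFun k y)
        (∑ k ∈ Finset.range n,
          σ ^ k * (-x * oscFun k x + Real.sqrt (2 * k) * oscFun (k - 1) x) * oscFun k y) x := by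
      apply HasDerivAt.fun_sum
      intro k _
      simpa [mul_assoc, mul_comm, mul_left_comm] using
        (((hasDerivAt_oscFun k x).const_mul (σ ^ k)).mul_const (oscFun k y))
    exact this
  have hy : HasDerivAt (fun v => hermiteJ n σ x v)
      (∑ k ∈ Finset.range n,
        σ ^ k * oscFun k x * (-y * oscFun k y + Real.sqrt (2 * k) * oscFun (k - 1) y)) y := by
    apply HasDerivAt.fun_sum
    intro k _
    exact ((hasDerivAt_oscFun k y).const_mul (σ ^ k * oscFun k x))
  rw [hx.deriv, hy.deriv]
  set f : ℕ → ℝ := fun k => Real.sqrt (2 * k) * σ ^ k * oscFun (k - 1) x * oscFun k y with hf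
  have hsum : (x * hermiteJ n σ x y + ∑ k ∈ Finset.range n,
        σ ^ k * (-x * oscFun k x + Real.sqrt (2 * k) * oscFun (k - 1) x) * oscFun k y)
      - σ * (y * hermiteJ n σ x y - ∑ k ∈ Finset.range n,
        σ ^ k * oscFun k x * (-y * oscFun k y + Real.sqrt (2 * k) * oscFun (k - 1) y))
      = ∑ k ∈ Finset.range n, (f k - f (k + 1)) := by
    simp only [hermiteJ, Finset.mul_sum, ← Finset.sum_sub_distrib, ← Finset.sum_add_distrib]
    apply Finset.sum_congr rfl
    intro k _
    have hB := oscFun_rec k y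
    simp only [hf, Nat.add_sub_cancel]
    push_cast
    linear_combination (-(σ ^ (k + 1)) * oscFun k x) * hB
  rw [hsum, Finset.sum_range_sub' f]
  have hf0 : f 0 = 0 := by simp [hf]
  have hs : Real.sqrt (2 * (n:ℝ)) = 2 * Real.sqrt ((n:ℝ) / 2) := by
    rw [show (2 * (n:ℝ)) = 2^2 * ((n:ℝ)/2) by ring, Real.sqrt_mul (by positivity),
      Real.sqrt_sq (by norm_num)]
  rw [hf0, hf]
  simp only
  rw [hs]
  ring
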